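/- Let G be an activity-on-edge graph and let H be any graph obtained from G by a finite sequence of applications of the simplification rules (Rule 1: merge two vertices with no outgoing task edges and identical outgoing neighbor sets, or two vertices with no incoming task edges and identical incoming neighbor sets; Rule 2: delete an unlabeled edge (u,v) when another path from u to v exists; Rule 3: merge the endpoints of an unlabeled edge (u,v) satisfying the conditions of Rule 3). Then G and H have the same set of potential critical paths, i.e., G ≡ H. -/

import Mathlib

namespace AOEPaper

/-- An activity-on-edge graph: a directed multigraph on the vertex set `verts`,
whose task edges are indexed by the type `T` (the distinct task labels), each task `t`
being an edge from `St t` to `En t`, together with a multiset `unl` of unlabeled edges. -/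
structure AOE (V T : Type) where
  verts : Finset V
  St : T → V
  En : T → V
  stMem : ∀ t, St t ∈ verts
  enMem : ∀ t, En t ∈ verts
  unl : Multiset (V × V)
  unlMem : ∀ e ∈ unl, e.1 ∈ verts ∧ e.2 ∈ verts

/-- One-step adjacency: an unlabeled edge or a task edge from `a` to `b`. -/
def AOE.adj {V T : Type} (G : AOE V T) (a b : V) : Prop :=
  (a, b) ∈ G.unl ∨ ∃ t, G.St t = a ∧ G.En t = b

/-- The graph has no directed cycle. -/
def AOE.Acyclic {V T : Type} (G : AOE V T) : Prop :=
  ∀ v : V, ¬ Relation.TransGen G.adj v v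

/-- Task `t` reaches task `t'`: `En t = St t'` or there is a directed path from
`En t` to `St t'` (intended only for `t ≠ t'`). -/
def AOE.reach {V T : Type} (G : AOE V T) (t t' : T) : Prop :=
  Relation.ReflTransGen G.adj (G.En t) (G.St t')

/-- A sequence of tasks in which each task reaches the next. -/
def AOE.chain {V T : Type} (G : AOE V T) (l : List T) : Prop :=
  l.Chain' fun t t' => t ≠ t' ∧ G.reach t t'

/-- A potential critical path: a maximal sequence of tasks in which each task
reaches the next (not a subsequence of any other such sequence). -/
def AOE.critPath {V T : Type} (G : AOE V T) (l : List T) : Prop :=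
  G.chain l ∧ ∀ l' : List T, G.chain l' → l.Sublist l' → l' = l

/-- Two AOEs with the same task labels are equivalent if they have the same set of
potential critical paths. -/
def AOE.Equiv {V W T : Type} (G : AOE V T) (H : AOE W T) : Prop :=
  ∀ l : List T, G.critPath l ↔ H.critPath l

/-- An AOE is optimal if it minimizes the number of vertices in its equivalence class. -/
def Optimal {W T : Type} (G : AOE W T) : Prop :=
  ∀ (U : Type) (H : AOE U T), H.Acyclic → AOE.Equiv G H → G.verts.card ≤ H.verts.card

/-- The vertex map replacing `v` by `u`. -/
def mergeV {V : Type} [DecidableEq V] (u v x : V) : V := if x = v then u else x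

theorem mergeV_mem {V : Type} [DecidableEq V] {S : Finset V} (u v x : V) (hx : x ∈ S) :
    mergeV u v x ∈ insert u (S.erase v) := by
  unfold mergeV
  split_ifs with h
  · exact Finset.mem_insert_self _ _
  · exact Finset.mem_insert_of_mem (Finset.mem_erase.mpr ⟨h, hx⟩)

/-- Merge vertices `u` and `v` into the single vertex `u`. -/
def AOE.merge {V T : Type} [DecidableEq V] (G : AOE V T) (u v : V) : AOE V T where
  verts := insert u (G.verts.erase v)
  St t := mergeV u v (G.St t)
  En t := mergeV u v (G.En t)
  stMem t := mergeV_mem u v (G.St t) (G.stMem t)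
  enMem t := mergeV_mem u v (G.En t) (G.enMem t)
  unl := G.unl.map fun e => (mergeV u v e.1, mergeV u v e.2)
  unlMem := by
    intro e he
    rw [Multiset.mem_map] at he
    obtain ⟨a, ha, rfl⟩ := he
    obtain ⟨h1, h2⟩ := G.unlMem a ha
    exact ⟨mergeV_mem u v a.1 h1, mergeV_mem u v a.2 h2⟩

/-- Delete one copy of the unlabeled edge `(u, v)`. -/
def AOE.delUnl {V T : Type} [DecidableEq V] (G : AOE V T) (u v : V) : AOE V T where
  verts := G.verts
  St := G.St
  En := G.En
  stMem := G.stMem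
  enMem := G.enMem
  unl := G.unl.erase (u, v)
  unlMem := fun e he => G.unlMem e (Multiset.mem_of_mem_erase he)

/-- Rule 1 (outgoing version): `u` and `v` are distinct vertices with no outgoing task
edges and precisely the same outgoing neighbors. -/
def Rule1OutCond {V T : Type} (G : AOE V T) (u v : V) : Prop :=
  u ∈ G.verts ∧ v ∈ G.verts ∧ u ≠ v ∧
    (∀ t, G.St t ≠ u) ∧ (∀ t, G.St t ≠ v) ∧ ∀ w, G.adj u w ↔ G.adj v w

/-- Rule 1 (incoming version): `u` and `v` are distinct vertices with no incoming task
edges and precisely the same incoming neighbors. -/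
def Rule1InCond {V T : Type} (G : AOE V T) (u v : V) : Prop :=
  u ∈ G.verts ∧ v ∈ G.verts ∧ u ≠ v ∧
    (∀ t, G.En t ≠ u) ∧ (∀ t, G.En t ≠ v) ∧ ∀ w, G.adj w u ↔ G.adj w v

/-- Rule 2: `(u, v)` is an unlabeled edge and there is another directed path from `u`
to `v` not using this edge. -/
def Rule2Cond {V T : Type} [DecidableEq V] (G : AOE V T) (u v : V) : Prop :=
  (u, v) ∈ G.unl ∧ Relation.TransGen (G.delUnl u v).adj u v

/-- Rule 3: `(u, v)` is an unlabeled edge such that (i) there is no other path from `u`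
to `v`; (ii) if `u` has an outgoing task then `v` has no incoming edge other than `(u,v)`;
(iii) if `v` has an incoming task then `u` has no outgoing edge other than `(u,v)`;
(iv) every incoming neighbor of `v` has a path to every outgoing neighbor of `u`. -/
def Rule3Cond {V T : Type} [DecidableEq V] (G : AOE V T) (u v : V) : Prop :=
  (u, v) ∈ G.unl ∧
  (¬ Relation.TransGen (G.delUnl u v).adj u v) ∧
  ((∃ t, G.St t = u) → (∀ t, G.En t ≠ v) ∧ ∀ w, (w, v) ∈ G.unl → w = u) ∧
  ((∃ t, G.En t = v) → (∀ t, G.St t ≠ u) ∧ ∀ w, (u, w) ∈ G.unl → w = v) ∧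
  ∀ w z, G.adj w v → G.adj u z → Relation.ReflTransGen G.adj w z

/-- One application of a simplification rule. -/
inductive Step {V T : Type} [DecidableEq V] : AOE V T → AOE V T → Prop
  | rule1out {G : AOE V T} (u v : V) : Rule1OutCond G u v → Step G (G.merge u v)
  | rule1in {G : AOE V T} (u v : V) : Rule1InCond G u v → Step G (G.merge u v)
  | rule2 {G : AOE V T} (u v : V) : Rule2Cond G u v → Step G (G.delUnl u v)
  | rule3 {G : AOE V T} (u v : V) : Rule3Cond G u v → Step G ((G.delUnl u v).merge u v)

/-- A canonical AOE: the naive expansion of an activity-on-node graph. Each task has its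
own pair of endpoint vertices, all pairwise distinct; there are a global start vertex `s`
and a global end vertex `e`; unlabeled edges other than those leaving `s` or entering `e`
go from end vertices of tasks to start vertices of tasks; `s` has unlabeled edges to
exactly the vertices whose only incoming edges come from `s`, and `e` has unlabeled edges
from exactly the vertices whose only outgoing edges go to `e`. -/
def Canonical {V T : Type} [DecidableEq V] [Fintype T] (G : AOE V T) : Prop :=
  G.Acyclic ∧ G.unl.Nodup ∧
  Function.Injective G.St ∧ Function.Injective G.En ∧
  (∀ t t' : T, G.St t ≠ G.En t') ∧
  ∃ s e : V, s ≠ e ∧ s ∈ G.verts ∧ e ∈ G.verts ∧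
    (∀ t, G.St t ≠ s ∧ G.St t ≠ e ∧ G.En t ≠ s ∧ G.En t ≠ e) ∧
    (G.verts =
      insert s (insert e (Finset.image G.St Finset.univ ∪ Finset.image G.En Finset.univ))) ∧
    (∀ a b : V, (a, b) ∈ G.unl → a ≠ s → b ≠ e → (∃ t, G.En t = a) ∧ ∃ t', G.St t' = b) ∧
    (∀ b : V, (s, b) ∈ G.unl ↔
      b ∈ G.verts ∧ b ≠ s ∧ (∀ t, G.En t ≠ b) ∧ ∀ a, (a, b) ∈ G.unl → a = s) ∧
    (∀ a : V, (a, e) ∈ G.unl ↔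
      a ∈ G.verts ∧ a ≠ e ∧ (∀ t, G.St t ≠ a) ∧ ∀ b, (a, b) ∈ G.unl → b = e)

/-- An output AOE: obtained from a canonical AOE by a finite sequence of rule
applications, such that no rule can still be applied. -/
def IsOutput {V T : Type} [DecidableEq V] [Fintype T] (G A : AOE V T) : Prop :=
  Canonical G ∧ Relation.ReflTransGen Step G A ∧ ∀ B : AOE V T, ¬ Step A B

theorem mergeSetV_mem {V : Type} [DecidableEq V] {S : Finset V} (C : Finset V) (c x : V)
    (hx : x ∈ S) : (if x ∈ C then c else x) ∈ insert c (S \ C) := by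
  split_ifs with h
  · exact Finset.mem_insert_self _ _
  · exact Finset.mem_insert_of_mem (Finset.mem_sdiff.mpr ⟨hx, h⟩)

/-- Merge all vertices of `C` into the single vertex `c`. -/
def AOE.mergeSet {V T : Type} [DecidableEq V] (G : AOE V T) (C : Finset V) (c : V) :
    AOE V T where
  verts := insert c (G.verts \ C)
  St t := if G.St t ∈ C then c else G.St t
  En t := if G.En t ∈ C then c else G.En t
  stMem t := mergeSetV_mem C c (G.St t) (G.stMem t)
  enMem t := mergeSetV_mem C c (G.En t) (G.enMem t)
  unl := G.unl.map fun e => (if e.1 ∈ C then c else e.1, if e.2 ∈ C then c else e.2)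
  unlMem := by
    intro e he
    rw [Multiset.mem_map] at he
    obtain ⟨a, ha, rfl⟩ := he
    obtain ⟨h1, h2⟩ := G.unlMem a ha
    exact ⟨mergeSetV_mem C c a.1 h1, mergeSetV_mem C c a.2 h2⟩

section Aux

variable {V T : Type} [DecidableEq V]

lemma mergeV_v (u v : V) : mergeV u v v = u := by simp [mergeV]

lemma mergeV_u (u v : V) : mergeV u v u = u := by unfold mergeV; split <;> rfl

lemma mergeV_of_ne {u v x : V} (h : x ≠ v) : mergeV u v x = x := if_neg h

lemma mergeV_eq_cases {u v a b : V} (h : mergeV u v a = mergeV u v b) :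
    a = b ∨ ((a = u ∨ a = v) ∧ (b = u ∨ b = v)) := by
  by_cases ha : a = v <;> by_cases hb : b = v
  · exact Or.inl (ha.trans hb.symm)
  · rw [ha, mergeV_v, mergeV_of_ne hb] at h
    exact Or.inr ⟨Or.inr ha, Or.inl h.symm⟩
  · rw [hb, mergeV_v, mergeV_of_ne ha] at h
    exact Or.inr ⟨Or.inl h, Or.inr hb⟩
  · rw [mergeV_of_ne ha, mergeV_of_ne hb] at h
    exact Or.inl h

lemma merge_adj_iff (G : AOE V T) (u v x y : V) :
    (G.merge u v).adj x y ↔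
      ∃ a b, G.adj a b ∧ mergeV u v a = x ∧ mergeV u v b = y := by
  constructor
  · rintro (h | ⟨t, h1, h2⟩)
    · simp only [AOE.merge, Multiset.mem_map, Prod.exists] at h
      obtain ⟨a, b, hab, h2⟩ := h
      rw [Prod.mk.injEq] at h2
      exact ⟨a, b, Or.inl hab, h2.1, h2.2⟩
    · exact ⟨G.St t, G.En t, Or.inr ⟨t, rfl, rfl⟩, h1, h2⟩
  · rintro ⟨a, b, hab, rfl, rfl⟩
    rcases hab with h | ⟨t, rfl, rfl⟩
    · exact Or.inl (Multiset.mem_map.mpr ⟨(a, b), h, rfl⟩)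
    · exact Or.inr ⟨t, rfl, rfl⟩

lemma delUnl_adj_sub {G : AOE V T} {u v a b : V} (h : (G.delUnl u v).adj a b) :
    G.adj a b := by
  rcases h with h | h
  · exact Or.inl (Multiset.mem_of_mem_erase h)
  · exact Or.inr h

lemma adj_delUnl_or {G : AOE V T} (u v : V) {a b : V} (h : G.adj a b) :
    (a = u ∧ b = v) ∨ (G.delUnl u v).adj a b := by
  rcases h with h | h
  · by_cases he : (a, b) = (u, v)
    · rw [Prod.mk.injEq] at he
      exact Or.inl he
    · exact Or.inr (Or.inl ((Multiset.mem_erase_of_ne he).mpr h))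
  · exact Or.inr (Or.inr h)

lemma rule1out_reach {G : AOE V T} {u v : V} (hc : Rule1OutCond G u v) (t t' : T) :
    G.reach t t' ↔ (G.merge u v).reach t t' := by
  obtain ⟨-, -, huv, hu, hv, hadj⟩ := hc
  constructor
  · intro h
    exact Relation.ReflTransGen.lift (mergeV u v)
      (fun a b hab => (merge_adj_iff G u v _ _).mpr ⟨a, b, hab, rfl, rfl⟩) _ _ h
  · intro h
    have key : ∀ x y, Relation.ReflTransGen (G.merge u v).adj x y →
        ∀ a, mergeV u v a = x →
          ∃ b, mergeV u v b = y ∧ Relation.ReflTransGen G.adj a b := by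
      intro x y hxy
      induction hxy using Relation.ReflTransGen.head_induction_on with
      | refl => exact fun a ha => ⟨a, ha, .refl⟩
      | head hstep htail ih =>
        intro a ha
        obtain ⟨a', b', hab, ha', hb'⟩ := (merge_adj_iff G u v _ _).mp hstep
        have hG : G.adj a b' := by
          rcases mergeV_eq_cases (ha.trans ha'.symm) with rfl | ⟨h1, h2⟩
          · exact hab
          · rcases h1 with rfl | rfl <;> rcases h2 with rfl | rfl <;>
              first
                | exact hab
                | exact (hadj b').mp hab
                | exact (hadj b').mpr hab
        obtain ⟨b, hb, hpath⟩ := ih b' hb'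
        exact ⟨b, hb, .head hG hpath⟩
    obtain ⟨b, hb, hpath⟩ := key _ _ h (G.En t) rfl
    have hb2 : mergeV u v b = mergeV u v (G.St t') := hb
    have hb' : b = G.St t' := by
      rcases mergeV_eq_cases hb2 with h' | ⟨h1, h2⟩
      · exact h'
      · rcases h2 with h2 | h2
        · exact absurd h2 (hu t')
        · exact absurd h2 (hv t')
    rwa [hb'] at hpath

lemma rule1in_reach {G : AOE V T} {u v : V} (hc : Rule1InCond G u v) (t t' : T) :
    G.reach t t' ↔ (G.merge u v).reach t t' := by
  obtain ⟨-, -, huv, hu, hv, hadj⟩ := hc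
  constructor
  · intro h
    exact Relation.ReflTransGen.lift (mergeV u v)
      (fun a b hab => (merge_adj_iff G u v _ _).mpr ⟨a, b, hab, rfl, rfl⟩) _ _ h
  · intro h
    have key : ∀ x y, Relation.ReflTransGen (G.merge u v).adj x y →
        ∀ b, mergeV u v b = y →
          ∃ a, mergeV u v a = x ∧ Relation.ReflTransGen G.adj a b := by
      intro x y hxy
      induction hxy with
      | refl => exact fun b hb => ⟨b, hb, .refl⟩
      | tail hxy hstep ih =>
        intro b hb
        obtain ⟨a', b', hab, ha', hb'⟩ := (merge_adj_iff G u v _ _).mp hstep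
        have hG : G.adj a' b := by
          rcases mergeV_eq_cases (hb.trans hb'.symm) with rfl | ⟨h1, h2⟩
          · exact hab
          · rcases h1 with rfl | rfl <;> rcases h2 with rfl | rfl <;>
              first
                | exact hab
                | exact (hadj a').mp hab
                | exact (hadj a').mpr hab
        obtain ⟨a, ha2, hpath⟩ := ih a' ha'
        exact ⟨a, ha2, hpath.tail hG⟩
    obtain ⟨a, ha2, hpath⟩ := key _ _ h (G.St t') rfl
    have ha3 : mergeV u v a = mergeV u v (G.En t) := ha2
    have ha' : a = G.En t := by
      rcases mergeV_eq_cases ha3 with h' | ⟨h1, h2⟩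
      · exact h'
      · rcases h2 with h2 | h2
        · exact absurd h2 (hu t)
        · exact absurd h2 (hv t)
    rwa [ha'] at hpath

lemma rtg_lift_of_forward {A : AOE V T} {r : V → V → Prop} (f : V → V)
    (hf : ∀ a b, A.adj a b → Relation.ReflTransGen r (f a) (f b)) :
    ∀ a b, Relation.ReflTransGen A.adj a b →
      Relation.ReflTransGen r (f a) (f b) := by
  intro a b h
  induction h with
  | refl => exact .refl
  | tail _ hstep ih => exact ih.trans (hf _ _ hstep)

lemma rule2_reach {G : AOE V T} {u v : V} (hc : Rule2Cond G u v) (t t' : T) :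
    G.reach t t' ↔ (G.delUnl u v).reach t t' := by
  obtain ⟨hmem, hpath⟩ := hc
  have forward : ∀ a b, G.adj a b →
      Relation.ReflTransGen (G.delUnl u v).adj a b := by
    intro a b hab
    rcases adj_delUnl_or u v hab with ⟨rfl, rfl⟩ | h
    · exact hpath.to_reflTransGen
    · exact .single h
  constructor
  · intro h
    exact rtg_lift_of_forward id forward _ _ h
  · intro h
    exact Relation.ReflTransGen.mono (fun a b => delUnl_adj_sub) _ _ h

lemma rule3_back {G : AOE V T} {u v : V} (hc : Rule3Cond G u v) {p : V}
    (hp : p = v → ∃ t0, G.En t0 = v) :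
    ∀ x y, Relation.ReflTransGen ((G.delUnl u v).merge u v).adj x y →
      ∀ b, mergeV u v b = x →
      (b = v → (∃ w, Relation.ReflTransGen G.adj p w ∧ G.adj w v) ∨ p = v) →
      Relation.ReflTransGen G.adj p b →
      ∃ c, mergeV u v c = y ∧
        (c = v → (∃ w, Relation.ReflTransGen G.adj p w ∧ G.adj w v) ∨ p = v) ∧
        Relation.ReflTransGen G.adj p c := by
  obtain ⟨hmem, -, hii, hiii, hiv⟩ := hc
  have huv : G.adj u v := Or.inl hmem
  intro x y hxy
  induction hxy using Relation.ReflTransGen.head_induction_on with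
  | refl => exact fun b hb hinv hpb => ⟨b, hb, hinv, hpb⟩
  | head hstep htail ih =>
    intro b hb hinv hpb
    obtain ⟨a', z, hadj, ha', hz⟩ := (merge_adj_iff _ u v _ _).mp hstep
    have hGz : G.adj a' z := delUnl_adj_sub hadj
    have hinvz : ∀ w0, Relation.ReflTransGen G.adj p w0 → G.adj w0 z →
        z = v → (∃ w, Relation.ReflTransGen G.adj p w ∧ G.adj w v) ∨ p = v := by
      intro w0 hpw0 hw0z hzv
      rw [hzv] at hw0z
      exact Or.inl ⟨w0, hpw0, hw0z⟩
    by_cases hba : b = a'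
    · have hbz : G.adj b z := by rw [hba]; exact hGz
      exact ih z hz (hinvz b hpb hbz) (hpb.tail hbz)
    · rcases mergeV_eq_cases (hb.trans ha'.symm) with h | ⟨h1, h2⟩
      · exact absurd h hba
      rcases h1 with hbu | hbv
      · -- b = u, hence a' = v
        have ha'v : a' = v := by
          rcases h2 with h2 | h2
          · exact absurd (hbu.trans h2.symm) hba
          · exact h2
        have h1' : G.adj b v := by rw [hbu]; exact huv
        have h2' : G.adj v z := by rw [← ha'v]; exact hGz
        exact ih z hz (hinvz v (hpb.tail h1') h2') ((hpb.tail h1').tail h2')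
      · -- b = v, hence a' = u
        have ha'u : a' = u := by
          rcases h2 with h2 | h2
          · exact h2
          · exact absurd (hbv.trans h2.symm) hba
        have hGz' : G.adj u z := by rw [← ha'u]; exact hGz
        rcases hinv hbv with ⟨w, hpw, hwv⟩ | hpv
        · have hwz : Relation.ReflTransGen G.adj w z := hiv w z hwv hGz'
          exact ih z hz (fun _ => Or.inl ⟨w, hpw, hwv⟩) (hpw.trans hwz)
        · obtain ⟨t0, ht0⟩ := hp hpv
          have hzv : z = v := by
            rcases hadj with h' | ⟨t1, hSt1, hEn1⟩
            · have hm : (a', z) ∈ G.unl := Multiset.mem_of_mem_erase h'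
              rw [ha'u] at hm
              exact (hiii ⟨t0, ht0⟩).2 z hm
            · rw [ha'u] at hSt1
              exact absurd hSt1 ((hiii ⟨t0, ht0⟩).1 t1)
          refine ih z hz (fun _ => Or.inr hpv) ?_
          rw [hpv, ← hzv]

lemma rule3_reach {G : AOE V T} {u v : V} (hc : Rule3Cond G u v) (t t' : T) :
    G.reach t t' ↔ ((G.delUnl u v).merge u v).reach t t' := by
  have huv : G.adj u v := Or.inl hc.1
  constructor
  · intro h
    have step : ∀ a b, G.adj a b →
        Relation.ReflTransGen ((G.delUnl u v).merge u v).adj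
          (mergeV u v a) (mergeV u v b) := by
      intro a b hab
      rcases adj_delUnl_or u v hab with ⟨rfl, rfl⟩ | h'
      · rw [mergeV_u, mergeV_v]
      · exact .single ((merge_adj_iff _ u v _ _).mpr ⟨a, b, h', rfl, rfl⟩)
    exact rtg_lift_of_forward (mergeV u v) step _ _ h
  · intro h
    obtain ⟨c, hcq, hinvc, hpc⟩ :=
      rule3_back hc (p := G.En t) (fun hpv => ⟨t, hpv⟩)
        (mergeV u v (G.En t)) (mergeV u v (G.St t')) h (G.En t) rfl
        (fun hbv => Or.inr hbv) Relation.ReflTransGen.refl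
    obtain ⟨hmem, -, hii, -, -⟩ := hc
    show Relation.ReflTransGen G.adj (G.En t) (G.St t')
    rcases mergeV_eq_cases hcq with heq | ⟨h1, h2⟩
    · rwa [heq] at hpc
    rcases h2 with h2 | h2
    · rcases h1 with h1 | h1
      · rw [h2, ← h1]
        exact hpc
      · rcases hinvc h1 with ⟨w, hpw, hwv⟩ | hpv
        · have hwu : w = u := by
            rcases hwv with hw | ⟨t0, hSt0, hEn0⟩
            · exact (hii ⟨t', h2⟩).2 w hw
            · exact absurd hEn0 ((hii ⟨t', h2⟩).1 t0)
          rw [h2, ← hwu]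
          exact hpw
        · exact absurd hpv ((hii ⟨t', h2⟩).1 t)
    · rcases h1 with h1 | h1
      · have hpu : Relation.ReflTransGen G.adj (G.En t) u := by
          rw [← h1]; exact hpc
        rw [h2]
        exact hpu.tail huv
      · rw [h2, ← h1]
        exact hpc

lemma step_reach {G H : AOE V T} (h : Step G H) (t t' : T) :
    G.reach t t' ↔ H.reach t t' := by
  cases h with
  | rule1out u v hc => exact rule1out_reach hc t t'
  | rule1in u v hc => exact rule1in_reach hc t t'
  | rule2 u v hc => exact rule2_reach hc t t'
  | rule3 u v hc => exact rule3_reach hc t t'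

lemma step_equiv {G H : AOE V T} (h : Step G H) (l : List T) :
    G.critPath l ↔ H.critPath l := by
  have hrel : (fun t t' : T => t ≠ t' ∧ G.reach t t')
      = fun t t' => t ≠ t' ∧ H.reach t t' := by
    funext t t'
    exact propext (and_congr_right fun _ => step_reach h t t')
  unfold AOE.critPath AOE.chain
  rw [hrel]

end Aux

/-- Any graph obtained from an AOE `G` by a finite sequence of applications
of Rules 1, 2 and 3 has the same set of potential critical paths as `G` (i.e. is
equivalent to `G`). -/
theorem stmt4 {V T : Type} [DecidableEq V] (G H : AOE V T) (hG : G.Acyclic)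
    (h : Relation.ReflTransGen Step G H) :
    ∀ l : List T, G.critPath l ↔ H.critPath l := by
  induction h with
  | refl => exact fun l => Iff.rfl
  | tail _ hstep ih => exact fun l => (ih l).trans (step_equiv hstep l)

end AOEPaper
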